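/- Let u₀(ξ) = tanh(ξ/√2) and f(u) = u³ − u (so f'(u) = 3u² − 1). Let u₁ : ℝ → ℝ be twice continuously differentiable such that u₁ and u₁'' are bounded on ℝ and lim_{ξ→±∞} u₁'(ξ) = 0. Then the function ξ ↦ u₀'(ξ)·[u₁''(ξ) − f'(u₀(ξ))·u₁(ξ)] is integrable on ℝ and ∫_{−∞}^{∞} u₀'(ξ)·[u₁''(ξ) − f'(u₀(ξ))·u₁(ξ)] dξ = 0. -/

import Mathlib

open MeasureTheory Filter

/-- The transition profile `u₀(ξ) = tanh(ξ/√2)`. -/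
noncomputable def transitionProfile (ξ : ℝ) : ℝ := Real.tanh (ξ / Real.sqrt 2)

/-- First derivative of the transition profile. -/
noncomputable def tpD (ξ : ℝ) : ℝ :=
  (Real.cosh (ξ / Real.sqrt 2) ^ 2)⁻¹ * (1 / Real.sqrt 2)

/-- Second derivative of the transition profile. -/
noncomputable def tpDD (ξ : ℝ) : ℝ :=
  -(Real.sinh (ξ / Real.sqrt 2) / Real.cosh (ξ / Real.sqrt 2) ^ 3)

lemma hasDerivAt_tanh' (x : ℝ) : HasDerivAt Real.tanh ((Real.cosh x ^ 2)⁻¹) x := by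
  have h := (Real.hasDerivAt_sinh x).div (Real.hasDerivAt_cosh x) (Real.cosh_pos x).ne'
  have heq : (Real.sinh / Real.cosh) = Real.tanh :=
    funext fun y => (Real.tanh_eq_sinh_div_cosh y).symm
  rw [heq] at h
  refine h.congr_deriv ?_
  symm
  have hc : Real.cosh x * Real.cosh x - Real.sinh x * Real.sinh x = 1 := by
    have := Real.cosh_sq_sub_sinh_sq x; nlinarith [this]
  rw [hc, inv_eq_one_div]

lemma hasDerivAt_div_sqrt2 (ξ : ℝ) :
    HasDerivAt (fun x : ℝ => x / Real.sqrt 2) (1 / Real.sqrt 2) ξ := by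
  simpa using (hasDerivAt_id ξ).div_const (Real.sqrt 2)

lemma hasDerivAt_tp (ξ : ℝ) : HasDerivAt transitionProfile (tpD ξ) ξ :=
  (hasDerivAt_tanh' (ξ / Real.sqrt 2)).comp ξ (hasDerivAt_div_sqrt2 ξ)

lemma sqrt2_mul_self : Real.sqrt 2 * Real.sqrt 2 = 2 := Real.mul_self_sqrt (by norm_num)

lemma sqrt2_ne : Real.sqrt 2 ≠ 0 := by positivity

lemma cosh_ne (t : ℝ) : Real.cosh t ≠ 0 := (Real.cosh_pos t).ne'

lemma hasDerivAt_tpD (ξ : ℝ) : HasDerivAt tpD (tpDD ξ) ξ := by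
  set t := ξ / Real.sqrt 2 with ht
  have hc : HasDerivAt (fun x : ℝ => Real.cosh (x / Real.sqrt 2))
      (Real.sinh t * (1 / Real.sqrt 2)) ξ := by
    have := (Real.hasDerivAt_cosh t).comp ξ (hasDerivAt_div_sqrt2 ξ); exact this
  have hsq := hc.pow 2
  have hne : Real.cosh (ξ / Real.sqrt 2) ^ 2 ≠ 0 := pow_ne_zero _ (cosh_ne _)
  have hinv := (hsq.inv hne).mul_const (1 / Real.sqrt 2)
  refine hinv.congr_deriv ?_
  symm
  simp only [Pi.pow_apply]
  unfold tpDD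
  rw [← ht]
  field_simp
  ring_nf
  rw [Real.sq_sqrt (by norm_num : (0:ℝ) ≤ 2)]

lemma hasDerivAt_tpDD (ξ : ℝ) :
    HasDerivAt tpDD ((3 * transitionProfile ξ ^ 2 - 1) * tpD ξ) ξ := by
  set t := ξ / Real.sqrt 2 with ht
  have hs : HasDerivAt (fun x : ℝ => Real.sinh (x / Real.sqrt 2))
      (Real.cosh t * (1 / Real.sqrt 2)) ξ := by
    have := (Real.hasDerivAt_sinh t).comp ξ (hasDerivAt_div_sqrt2 ξ); exact this
  have hc : HasDerivAt (fun x : ℝ => Real.cosh (x / Real.sqrt 2))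
      (Real.sinh t * (1 / Real.sqrt 2)) ξ := by
    have := (Real.hasDerivAt_cosh t).comp ξ (hasDerivAt_div_sqrt2 ξ); exact this
  have hc3 := hc.pow 3
  have hne : Real.cosh (ξ / Real.sqrt 2) ^ 3 ≠ 0 := pow_ne_zero _ (cosh_ne _)
  have hdiv := (hs.div hc3 hne).neg
  refine hdiv.congr_deriv ?_
  symm
  simp only [Pi.pow_apply]
  unfold transitionProfile tpD
  rw [← ht, Real.tanh_eq_sinh_div_cosh]
  field_simp
  ring_nf


lemma abs_sinh_le_cosh (x : ℝ) : |Real.sinh x| ≤ Real.cosh x := by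
  rw [abs_le]
  constructor
  · have h := Real.sinh_lt_cosh (x := -x)
    rw [Real.sinh_neg, Real.cosh_neg] at h
    linarith
  · exact le_of_lt (Real.sinh_lt_cosh (x := x))

lemma one_le_sqrt2 : (1 : ℝ) ≤ Real.sqrt 2 := by
  nlinarith [sqrt2_mul_self, Real.sqrt_nonneg 2]

lemma cosh_sq_inv_le (ξ : ℝ) :
    (Real.cosh (ξ / Real.sqrt 2) ^ 2)⁻¹ ≤ 4 * Real.exp (-|ξ|) := by
  set t := ξ / Real.sqrt 2 with ht
  have h1 : Real.exp |t| / 2 ≤ Real.cosh t := by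
    rw [Real.cosh_eq]
    rcases abs_cases t with ⟨h, _⟩ | ⟨h, _⟩ <;> rw [h] <;>
      [linarith [Real.exp_pos (-t)]; linarith [Real.exp_pos t]]
  have h2 : Real.exp (2 * |t|) / 4 ≤ Real.cosh t ^ 2 := by
    have hp := pow_le_pow_left₀ (by positivity) h1 2
    calc Real.exp (2 * |t|) / 4 = (Real.exp |t| / 2) ^ 2 := by
          rw [div_pow, ← Real.exp_nat_mul]
          norm_num
      _ ≤ _ := hp
  have h3 : (Real.cosh t ^ 2)⁻¹ ≤ 4 * Real.exp (-(2 * |t|)) := by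
    have hi := inv_anti₀ (by positivity) h2
    rw [inv_div] at hi
    rw [Real.exp_neg]
    calc (Real.cosh t ^ 2)⁻¹ ≤ 4 / Real.exp (2 * |t|) := hi
      _ = 4 * (Real.exp (2 * |t|))⁻¹ := by ring
  have h4 : |ξ| ≤ 2 * |t| := by
    have ht2 : 2 * |t| = Real.sqrt 2 * |ξ| := by
      rw [ht, abs_div, abs_of_nonneg (Real.sqrt_nonneg 2)]
      field_simp
      linear_combination -|ξ| * sqrt2_mul_self
    rw [ht2]
    nlinarith [abs_nonneg ξ, one_le_sqrt2]
  calc (Real.cosh t ^ 2)⁻¹ ≤ 4 * Real.exp (-(2 * |t|)) := h3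
    _ ≤ 4 * Real.exp (-|ξ|) := by
        have := Real.exp_le_exp.mpr (neg_le_neg h4)
        linarith

lemma tpD_nonneg (ξ : ℝ) : 0 ≤ tpD ξ := by
  unfold tpD; positivity

lemma abs_tpD_le (ξ : ℝ) : |tpD ξ| ≤ 4 * Real.exp (-|ξ|) := by
  rw [abs_of_nonneg (tpD_nonneg ξ)]
  unfold tpD
  calc (Real.cosh (ξ / Real.sqrt 2) ^ 2)⁻¹ * (1 / Real.sqrt 2)
      ≤ (Real.cosh (ξ / Real.sqrt 2) ^ 2)⁻¹ * 1 := by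
        apply mul_le_mul_of_nonneg_left _ (by positivity)
        rw [div_le_one (by positivity)]
        exact one_le_sqrt2
    _ = (Real.cosh (ξ / Real.sqrt 2) ^ 2)⁻¹ := mul_one _
    _ ≤ 4 * Real.exp (-|ξ|) := cosh_sq_inv_le ξ

lemma abs_tpD_le_one (ξ : ℝ) : |tpD ξ| ≤ 1 := by
  rw [abs_of_nonneg (tpD_nonneg ξ)]
  unfold tpD
  have h1 : (1 : ℝ) ≤ Real.cosh (ξ / Real.sqrt 2) ^ 2 := by
    nlinarith [Real.one_le_cosh (ξ / Real.sqrt 2)]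
  have h2 : (Real.cosh (ξ / Real.sqrt 2) ^ 2)⁻¹ ≤ 1 := by
    rw [inv_le_one_iff₀]; right; exact h1
  have h3 : 1 / Real.sqrt 2 ≤ 1 := by
    rw [div_le_one (by positivity)]; exact one_le_sqrt2
  nlinarith [tpD_nonneg ξ, Real.sqrt_nonneg 2, inv_nonneg.mpr (sq_nonneg (Real.cosh (ξ / Real.sqrt 2)))]

lemma abs_tpDD_le (ξ : ℝ) : |tpDD ξ| ≤ 4 * Real.exp (-|ξ|) := by
  unfold tpDD
  rw [abs_neg, abs_div, abs_of_nonneg (by positivity : (0:ℝ) ≤ Real.cosh (ξ / Real.sqrt 2) ^ 3)]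
  set t := ξ / Real.sqrt 2
  calc |Real.sinh t| / Real.cosh t ^ 3
      ≤ Real.cosh t / Real.cosh t ^ 3 := by
        apply div_le_div_of_nonneg_right ?_ (by positivity)
        exact abs_sinh_le_cosh t
    _ = (Real.cosh t ^ 2)⁻¹ := by
        field_simp
    _ ≤ 4 * Real.exp (-|ξ|) := cosh_sq_inv_le ξ

lemma tp_sq_le_one (ξ : ℝ) : transitionProfile ξ ^ 2 ≤ 1 := by
  unfold transitionProfile
  rw [Real.tanh_eq_sinh_div_cosh, div_pow, div_le_one (by positivity)]
  set t := ξ / Real.sqrt 2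
  calc Real.sinh t ^ 2 = |Real.sinh t| ^ 2 := (sq_abs _).symm
    _ ≤ Real.cosh t ^ 2 := by
        apply pow_le_pow_left₀ (abs_nonneg _) (abs_sinh_le_cosh t)

lemma abs_fp_le (ξ : ℝ) : |3 * transitionProfile ξ ^ 2 - 1| ≤ 2 := by
  rw [abs_le]
  constructor
  · nlinarith [sq_nonneg (transitionProfile ξ)]
  · nlinarith [tp_sq_le_one ξ]

lemma integrable_exp_neg_abs : Integrable (fun ξ : ℝ => Real.exp (-|ξ|)) := by
  rw [← integrableOn_univ, ← Set.Iic_union_Ioi (a := (0 : ℝ))]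
  apply IntegrableOn.union
  · exact (integrableOn_exp_Iic 0).congr_fun
      (fun x hx => by simp [abs_of_nonpos (Set.mem_Iic.mp hx)]) measurableSet_Iic
  · exact (exp_neg_integrableOn_Ioi 0 (by norm_num : (0:ℝ) < 1)).congr_fun
      (fun x hx => by
        simp [abs_of_pos (Set.mem_Ioi.mp hx)]) measurableSet_Ioi

lemma tendsto_exp_neg_abs_atTop :
    Tendsto (fun ξ : ℝ => Real.exp (-|ξ|)) atTop (nhds 0) :=
  Real.tendsto_exp_atBot.comp (tendsto_neg_atTop_atBot.comp tendsto_abs_atTop_atTop)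

lemma tendsto_exp_neg_abs_atBot :
    Tendsto (fun ξ : ℝ => Real.exp (-|ξ|)) atBot (nhds 0) :=
  Real.tendsto_exp_atBot.comp (tendsto_neg_atTop_atBot.comp tendsto_abs_atBot_atTop)

lemma continuous_tp : Continuous transitionProfile :=
  continuous_iff_continuousAt.mpr fun x => (hasDerivAt_tp x).continuousAt

lemma continuous_tpD : Continuous tpD := by
  unfold tpD
  apply Continuous.mul _ continuous_const
  apply Continuous.inv₀
  · exact (Real.continuous_cosh.comp (continuous_id.div_const _)).pow 2
  · intro x
    exact pow_ne_zero _ (cosh_ne _)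

/-- Orthogonality identity used in the inner expansion of the sharp-interface
limit: for `u₀(ξ) = tanh(ξ/√2)`, `f(u) = u³ − u` (so `f'(u) = 3u² − 1`), and any
`C²` function `u₁` with `u₁` and `u₁''` bounded and `u₁'(ξ) → 0` as `ξ → ±∞`,
the function `ξ ↦ u₀'(ξ)[u₁''(ξ) − f'(u₀(ξ))u₁(ξ)]` is integrable on `ℝ` with
integral zero. -/
theorem inner_expansion_orthogonality (u₁ : ℝ → ℝ)
    (hu₁ : ContDiff ℝ 2 u₁)
    (hbdd : ∃ C : ℝ, ∀ ξ : ℝ, |u₁ ξ| ≤ C)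
    (hbdd'' : ∃ C : ℝ, ∀ ξ : ℝ, |deriv (deriv u₁) ξ| ≤ C)
    (htop : Tendsto (deriv u₁) atTop (nhds 0))
    (hbot : Tendsto (deriv u₁) atBot (nhds 0)) :
    Integrable (fun ξ : ℝ =>
      deriv transitionProfile ξ *
        (deriv (deriv u₁) ξ - (3 * transitionProfile ξ ^ 2 - 1) * u₁ ξ)) volume ∧
    (∫ ξ : ℝ, deriv transitionProfile ξ *
        (deriv (deriv u₁) ξ - (3 * transitionProfile ξ ^ 2 - 1) * u₁ ξ)) = 0 := by
  obtain ⟨C₁, hC₁⟩ := hbdd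
  obtain ⟨C₂, hC₂⟩ := hbdd''
  have hC₁0 : 0 ≤ C₁ := le_trans (abs_nonneg _) (hC₁ 0)
  have hC₂0 : 0 ≤ C₂ := le_trans (abs_nonneg _) (hC₂ 0)
  have hderiv_tp : deriv transitionProfile = tpD := funext fun ξ => (hasDerivAt_tp ξ).deriv
  rw [hderiv_tp]
  -- regularity of u₁
  have h2 : ContDiff ℝ ((1 : ℕ) + (1 : ℕ) : ℕ) u₁ := by exact_mod_cast hu₁
  have hd1 : ContDiff ℝ (1 : ℕ) (deriv u₁) := by
    have := ContDiff.iterate_deriv' 1 1 h2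
    simpa using this
  have hdiffu : Differentiable ℝ u₁ := hu₁.differentiable (by norm_num)
  have hdiff1 : Differentiable ℝ (deriv u₁) := hd1.differentiable (by norm_num)
  have hcont2 : Continuous (deriv (deriv u₁)) := hd1.continuous_deriv (by norm_num)
  -- integrability
  have hint : Integrable (fun ξ : ℝ =>
      tpD ξ * (deriv (deriv u₁) ξ - (3 * transitionProfile ξ ^ 2 - 1) * u₁ ξ)) volume := by
    apply Integrable.mono' ((integrable_exp_neg_abs.const_mul 4).mul_const (C₂ + 2 * C₁))
    · apply Continuous.aestronglyMeasurable
      apply continuous_tpD.mul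
      apply hcont2.sub
      apply Continuous.mul _ (hu₁.continuous)
      exact ((continuous_const.mul (continuous_tp.pow 2)).sub continuous_const)
    · filter_upwards with ξ
      rw [norm_mul]
      have hb1 : ‖tpD ξ‖ ≤ 4 * Real.exp (-|ξ|) := abs_tpD_le ξ
      have hb2 : ‖deriv (deriv u₁) ξ - (3 * transitionProfile ξ ^ 2 - 1) * u₁ ξ‖
          ≤ C₂ + 2 * C₁ := by
        calc ‖deriv (deriv u₁) ξ - (3 * transitionProfile ξ ^ 2 - 1) * u₁ ξ‖
            ≤ |deriv (deriv u₁) ξ| + |(3 * transitionProfile ξ ^ 2 - 1) * u₁ ξ| :=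
              abs_sub _ _
          _ ≤ C₂ + 2 * C₁ := by
              have := abs_mul (3 * transitionProfile ξ ^ 2 - 1) (u₁ ξ)
              have h3 := mul_le_mul (abs_fp_le ξ) (hC₁ ξ) (abs_nonneg _) (by norm_num)
              nlinarith [hC₂ ξ, abs_nonneg (u₁ ξ)]
      exact mul_le_mul hb1 hb2 (norm_nonneg _) (by positivity)
  refine ⟨hint, ?_⟩
  -- antiderivative
  set G : ℝ → ℝ := fun ξ => tpD ξ * deriv u₁ ξ - tpDD ξ * u₁ ξ with hG
  have hGderiv : ∀ ξ, HasDerivAt G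
      (tpD ξ * (deriv (deriv u₁) ξ - (3 * transitionProfile ξ ^ 2 - 1) * u₁ ξ)) ξ := by
    intro ξ
    have h1 := (hasDerivAt_tpD ξ).mul (hdiff1 ξ).hasDerivAt
    have h2' := (hasDerivAt_tpDD ξ).mul (hdiffu ξ).hasDerivAt
    have h3 := h1.sub h2'
    refine h3.congr_deriv ?_
    symm
    ring
  -- limits of G at ±∞
  have hGtop : Tendsto G atTop (nhds 0) := by
    have ht1 : Tendsto (fun ξ => tpD ξ * deriv u₁ ξ) atTop (nhds 0) := by
      refine squeeze_zero_norm (a := fun ξ => ‖deriv u₁ ξ‖) ?_ ?_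
      · intro ξ
        rw [norm_mul]
        calc ‖tpD ξ‖ * ‖deriv u₁ ξ‖ ≤ 1 * ‖deriv u₁ ξ‖ :=
            mul_le_mul_of_nonneg_right (abs_tpD_le_one ξ) (norm_nonneg _)
          _ = ‖deriv u₁ ξ‖ := one_mul _
      · simpa using htop.norm
    have ht2 : Tendsto (fun ξ => tpDD ξ * u₁ ξ) atTop (nhds 0) := by
      refine squeeze_zero_norm (a := fun ξ => 4 * Real.exp (-|ξ|) * C₁) ?_ ?_
      · intro ξ
        rw [norm_mul]
        exact mul_le_mul (abs_tpDD_le ξ) (hC₁ ξ) (norm_nonneg _) (by positivity)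
      · have := (tendsto_exp_neg_abs_atTop.const_mul 4).mul_const C₁
        simpa using this
    simpa using ht1.sub ht2
  have hGbot : Tendsto G atBot (nhds 0) := by
    have ht1 : Tendsto (fun ξ => tpD ξ * deriv u₁ ξ) atBot (nhds 0) := by
      refine squeeze_zero_norm (a := fun ξ => ‖deriv u₁ ξ‖) ?_ ?_
      · intro ξ
        rw [norm_mul]
        calc ‖tpD ξ‖ * ‖deriv u₁ ξ‖ ≤ 1 * ‖deriv u₁ ξ‖ :=
            mul_le_mul_of_nonneg_right (abs_tpD_le_one ξ) (norm_nonneg _)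
          _ = ‖deriv u₁ ξ‖ := one_mul _
      · simpa using hbot.norm
    have ht2 : Tendsto (fun ξ => tpDD ξ * u₁ ξ) atBot (nhds 0) := by
      refine squeeze_zero_norm (a := fun ξ => 4 * Real.exp (-|ξ|) * C₁) ?_ ?_
      · intro ξ
        rw [norm_mul]
        exact mul_le_mul (abs_tpDD_le ξ) (hC₁ ξ) (norm_nonneg _) (by positivity)
      · have := (tendsto_exp_neg_abs_atBot.const_mul 4).mul_const C₁
        simpa using this
    simpa using ht1.sub ht2
  have := integral_of_hasDerivAt_of_tendsto hGderiv hint hGbot hGtop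
  simpa using this
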